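/- arXiv:1608.01359 — 2 statements merged into one kernel-verified Lean document; each statement's English description precedes it below -/
import Mathlib

section
/- Krylov's propagating ink spots lemma (balls). For every integer n ≥ 1 and every η ∈ (0,1) there exist ξ ∈ (0,1) and ζ > 0, depending only on n and η, such that the following holds. Let A ⊆ B₁ be a Lebesgue-measurable set with |A| ≤ η·|B₁|. Let à be the union of all balls B_{ξρ}(x) over pairs (x,ρ) with x ∈ ℝⁿ, ρ > 0, such that B_ρ(x) ⊆ B₁ and |B_ρ(x) ∩ A| ≥ η·|B_ρ(x)|. Then |Ã| ≥ (1+ζ)·|A|. -/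
open MeasureTheory
open scoped ENNReal

/-- The Pucci minimal extremal operator `𝓜⁻(M)` with ellipticity constants `lam ≤ Lam`:
the infimum of `tr(A*M)` over symmetric matrices `A` with `lam•I ≤ A ≤ Lam•I`. -/
noncomputable def pucciMinus (n : ℕ) (lam Lam : ℝ) (M : Matrix (Fin n) (Fin n) ℝ) : ℝ :=
  sInf { t : ℝ | ∃ A : Matrix (Fin n) (Fin n) ℝ, A.IsSymm ∧
    (A - lam • (1 : Matrix (Fin n) (Fin n) ℝ)).PosSemidef ∧
    (Lam • (1 : Matrix (Fin n) (Fin n) ℝ) - A).PosSemidef ∧ t = (A * M).trace }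

/-- The Pucci maximal extremal operator `𝓜⁺(M)`. -/
noncomputable def pucciPlus (n : ℕ) (lam Lam : ℝ) (M : Matrix (Fin n) (Fin n) ℝ) : ℝ :=
  sSup { t : ℝ | ∃ A : Matrix (Fin n) (Fin n) ℝ, A.IsSymm ∧
    (A - lam • (1 : Matrix (Fin n) (Fin n) ℝ)).PosSemidef ∧
    (Lam • (1 : Matrix (Fin n) (Fin n) ℝ) - A).PosSemidef ∧ t = (A * M).trace }

/-- The Hessian matrix `D²u(x)` of `u` at `x`. -/
noncomputable def hess (n : ℕ) (u : EuclideanSpace ℝ (Fin n) → ℝ)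
    (x : EuclideanSpace ℝ (Fin n)) : Matrix (Fin n) (Fin n) ℝ :=
  fun i j => fderiv ℝ (fun y => fderiv ℝ u y (EuclideanSpace.single j (1 : ℝ))) x
    (EuclideanSpace.single i (1 : ℝ))

/-- The euclidean norm `|Du(x)|` of the gradient of `u` at `x`. -/
noncomputable def gradNorm (n : ℕ) (u : EuclideanSpace ℝ (Fin n) → ℝ)
    (x : EuclideanSpace ℝ (Fin n)) : ℝ := ‖fderiv ℝ u x‖

/-- The `L^p` norm `(∫_E |g|^p)^(1/p)`, as a Lebesgue integral valued in `[0,∞]`. -/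
noncomputable def LpNormE (n : ℕ) (p : ℝ) (g : EuclideanSpace ℝ (Fin n) → ℝ)
    (E : Set (EuclideanSpace ℝ (Fin n))) : ℝ≥0∞ :=
  (∫⁻ x in E, ENNReal.ofReal (|g x| ^ p)) ^ (1 / p)

/-- The last (`n`-th) coordinate `x_n` of a point of `ℝⁿ`. -/
def lastC (n : ℕ) (hn : 1 ≤ n) (x : EuclideanSpace ℝ (Fin n)) : ℝ := x ⟨n - 1, by omega⟩

/-- The open half-ball `B_R⁺ = {|x| < R, x_n > 0}`. -/
def halfBall (n : ℕ) (hn : 1 ≤ n) (R : ℝ) : Set (EuclideanSpace ℝ (Fin n)) :=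
  {x | ‖x‖ < R ∧ 0 < lastC n hn x}

/-- The flat boundary part `B_R⁰ = {|x| ≤ R, x_n = 0}`. -/
def flatB (n : ℕ) (hn : 1 ≤ n) (R : ℝ) : Set (EuclideanSpace ℝ (Fin n)) :=
  {x | ‖x‖ ≤ R ∧ lastC n hn x = 0}

/-- The norm `‖g‖_{L^{p,q}(B_R⁺)} = ‖g‖_{L^p(B_R⁺)} + ‖g‖_{L^q(B_R⁺ ∩ {x_n < d0})}`. -/
noncomputable def LpqNormHB (n : ℕ) (hn : 1 ≤ n) (p q d0 R : ℝ)
    (g : EuclideanSpace ℝ (Fin n) → ℝ) : ℝ≥0∞ :=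
  LpNormE n p g (halfBall n hn R) +
    LpNormE n q g {x ∈ halfBall n hn R | lastC n hn x < d0}

/-- The open cube `Q_ρ` of side `ρ` centered at `(0,…,0,ρ/2)`. -/
def cubeQ (n : ℕ) (hn : 1 ≤ n) (ρ : ℝ) : Set (EuclideanSpace ℝ (Fin n)) :=
  {x | (∀ i : Fin n, i.1 ≠ n - 1 → |x i| < ρ / 2) ∧ 0 < lastC n hn x ∧ lastC n hn x < ρ}

/-- The norm `‖g‖_{L^{p,q}(Q₂)} = ‖g‖_{L^p(Q₂)} + ‖g‖_{L^q(Q₂ ∩ {x_n < d0})}`. -/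
noncomputable def LpqNormQ (n : ℕ) (hn : 1 ≤ n) (p q d0 : ℝ)
    (g : EuclideanSpace ℝ (Fin n) → ℝ) : ℝ≥0∞ :=
  LpNormE n p g (cubeQ n hn 2) +
    LpNormE n q g {x ∈ cubeQ n hn 2 | lastC n hn x < d0}

section InkSpotsAux
open Metric Set Filter
open scoped Topology

lemma aux_pow_sub (n : ℕ) {a b : ℝ} (ha : 0 ≤ a) (hab : a ≤ b) (hb : b ≤ 1) :
    b ^ n - a ^ n ≤ n * (b - a) := by
  induction n with
  | zero => simp
  | succ m ih =>
    have hbm : b ^ m ≤ 1 := pow_le_one₀ (ha.trans hab) hb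
    have ham : a ^ m ≤ b ^ m := pow_le_pow_left₀ ha hab m
    have h0 : 0 ≤ a ^ m := pow_nonneg ha m
    have hb0 : 0 ≤ b := ha.trans hab
    rw [pow_succ, pow_succ]
    push_cast
    nlinarith [ih, mul_nonneg (sub_nonneg.2 hab) h0]

lemma aux_nontrivial (n : ℕ) (hn : 1 ≤ n) : Nontrivial (EuclideanSpace ℝ (Fin n)) := by
  apply Module.nontrivial_of_finrank_pos (R := ℝ)
  rw [finrank_euclideanSpace_fin]
  omega

lemma aux_vol_ball (n : ℕ) (hn : 1 ≤ n) (x : EuclideanSpace ℝ (Fin n)) {r : ℝ} (hr : 0 ≤ r) :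
    volume (ball x r) = ENNReal.ofReal (r ^ n) * volume (ball (0 : EuclideanSpace ℝ (Fin n)) 1) := by
  haveI := aux_nontrivial n hn
  rw [MeasureTheory.Measure.addHaar_ball volume x hr, finrank_euclideanSpace_fin]

section
variable {n : ℕ}

lemma aux_nested (x : EuclideanSpace ℝ (Fin n)) (hx : ‖x‖ < 1) {r r' : ℝ}
    (hr : 0 < r) (hrr : r ≤ r') (hr1 : r' ≤ 1) :
    dist ((if r ≤ 1 - ‖x‖ then x else ((1-r)/‖x‖) • x))
      ((if r' ≤ 1 - ‖x‖ then x else ((1-r')/‖x‖) • x)) + r ≤ r' := by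
  have hxnn : (0:ℝ) ≤ ‖x‖ := norm_nonneg x
  split_ifs with h1 h2 h2
  · simp [dist_self]; linarith
  · -- r ≤ 1-‖x‖ < r'
    have hx0 : 0 < ‖x‖ := by
      by_contra h; push_neg at h
      have : ‖x‖ = 0 := le_antisymm h hxnn
      rw [this] at h2; push_neg at h2; linarith
    have key : dist x (((1-r')/‖x‖) • x) = ‖x‖ - (1 - r') := by
      rw [dist_eq_norm]
      have : x - ((1-r')/‖x‖) • x = (1 - (1-r')/‖x‖) • x := by
        rw [sub_smul, one_smul]
      rw [this, norm_smul, Real.norm_eq_abs]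
      have h1r' : 1 - r' ≤ ‖x‖ := by push_neg at h2; linarith
      rw [abs_of_nonneg (by rw [sub_nonneg, div_le_one hx0]; exact h1r')]
      field_simp
    rw [key]; linarith
  · -- r' ≤ 1-‖x‖ < r : impossible
    exact absurd (hrr.trans h2) h1
  · -- both >
    have hx0 : 0 < ‖x‖ := by
      by_contra h; push_neg at h
      have : ‖x‖ = 0 := le_antisymm h hxnn
      rw [this] at h1; push_neg at h1; linarith
    have key : dist (((1-r)/‖x‖) • x) (((1-r')/‖x‖) • x) = r' - r := by
      rw [dist_eq_norm, ← sub_smul, norm_smul, Real.norm_eq_abs]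
      have : (1-r)/‖x‖ - (1-r')/‖x‖ = (r' - r)/‖x‖ := by ring
      rw [this, abs_of_nonneg (div_nonneg (by linarith) hx0.le)]
      field_simp
    rw [key]; linarith

lemma aux_cnorm (x : EuclideanSpace ℝ (Fin n)) (hx : ‖x‖ < 1) {r : ℝ}
    (hr : 0 < r) (hr1 : r ≤ 1) :
    ‖(if r ≤ 1 - ‖x‖ then x else ((1-r)/‖x‖) • x)‖ + r ≤ 1 := by
  have hxnn : (0:ℝ) ≤ ‖x‖ := norm_nonneg x
  split_ifs with h1
  · linarith
  · have hx0 : 0 < ‖x‖ := by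
      by_contra h; push_neg at h
      have : ‖x‖ = 0 := le_antisymm h hxnn
      rw [this] at h1; push_neg at h1; linarith
    rw [norm_smul, Real.norm_eq_abs, abs_of_nonneg (div_nonneg (by linarith) hx0.le)]
    rw [div_mul_cancel₀ _ hx0.ne']
    linarith

end


lemma exists_eq_ball (n : ℕ) (hn : 1 ≤ n) (η : ℝ) (hη0 : 0 < η)
    (A : Set (EuclideanSpace ℝ (Fin n))) (hAmeas : MeasurableSet A)
    (hAsub : A ⊆ ball 0 1)
    (hAvol : volume A ≤ ENNReal.ofReal η * volume (ball (0 : EuclideanSpace ℝ (Fin n)) 1))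
    (x : EuclideanSpace ℝ (Fin n)) (hx : ‖x‖ < 1)
    (ρ₀ : ℝ) (hρ₀ : 0 < ρ₀) (hρ₀' : ρ₀ ≤ 1 - ‖x‖)
    (hdens : ENNReal.ofReal η * volume (ball x ρ₀) ≤ volume (ball x ρ₀ ∩ A)) :
    ∃ y r, 0 < r ∧ r ≤ 1 ∧ x ∈ ball y r ∧ ball y r ⊆ ball (0:EuclideanSpace ℝ (Fin n)) 1 ∧
      volume (ball y r ∩ A) = ENNReal.ofReal η * volume (ball y r) := by
  set κ : ℝ≥0∞ := volume (ball (0:EuclideanSpace ℝ (Fin n)) 1) with hκ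
  have hκtop : κ ≠ ⊤ := measure_ball_lt_top.ne
  set κT : ℝ := κ.toReal with hκT
  have hκT0 : 0 ≤ κT := ENNReal.toReal_nonneg
  set c : ℝ → EuclideanSpace ℝ (Fin n) :=
    fun r => if r ≤ 1 - ‖x‖ then x else ((1-r)/‖x‖) • x with hc
  have hρ₀1 : ρ₀ ≤ 1 := by have := norm_nonneg x; linarith
  have hnest : ∀ {r r' : ℝ}, 0 < r → r ≤ r' → r' ≤ 1 → ball (c r) r ⊆ ball (c r') r' := by
    intro r r' h1 h2 h3
    exact ball_subset_ball' (by have := aux_nested x hx h1 h2 h3; linarith)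
  have hsubB1 : ∀ {r : ℝ}, 0 < r → r ≤ 1 →
      ball (c r) r ⊆ ball (0:EuclideanSpace ℝ (Fin n)) 1 := by
    intro r h1 h2
    exact ball_subset_ball' (by have := aux_cnorm x hx h1 h2; rw [dist_zero_right]; linarith)
  have hvol : ∀ (r : ℝ), 0 ≤ r → volume (ball (c r) r) = ENNReal.ofReal (r^n) * κ :=
    fun r hr => aux_vol_ball n hn (c r) hr
  have hvolT : ∀ (r : ℝ), 0 ≤ r → (volume (ball (c r) r)).toReal = κT * r^n := by
    intro r hr
    rw [hvol r hr, ENNReal.toReal_mul, ENNReal.toReal_ofReal (pow_nonneg hr n), mul_comm]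
  have hfin : ∀ (r : ℝ), volume (ball (c r) r ∩ A) ≠ ⊤ :=
    fun r => ((measure_mono inter_subset_left).trans_lt measure_ball_lt_top).ne
  set g : ℝ → ℝ := fun r => (volume (ball (c r) r ∩ A)).toReal with hg
  have hinc : ∀ {r r' : ℝ}, 0 < r → r ≤ r' → r' ≤ 1 →
      g r ≤ g r' ∧ g r' - g r ≤ κT * r'^n - κT * r^n := by
    intro r r' h1 h2 h3
    have hBB : ball (c r) r ⊆ ball (c r') r' := hnest h1 h2 h3
    refine ⟨ENNReal.toReal_mono (hfin r') (measure_mono (inter_subset_inter_left _ hBB)), ?_⟩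
    have hsub : ball (c r') r' ∩ A ⊆ (ball (c r) r ∩ A) ∪ (ball (c r') r' \ ball (c r) r) := by
      intro z hz
      by_cases hzb : z ∈ ball (c r) r
      · exact Or.inl ⟨hzb, hz.2⟩
      · exact Or.inr ⟨hz.1, hzb⟩
    have hdtop : volume (ball (c r') r' \ ball (c r) r) ≠ ⊤ :=
      ((measure_mono diff_subset).trans_lt measure_ball_lt_top).ne
    have h4 : volume (ball (c r') r' ∩ A) ≤
        volume (ball (c r) r ∩ A) + volume (ball (c r') r' \ ball (c r) r) :=
      (measure_mono hsub).trans (measure_union_le _ _)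
    have h5 : g r' ≤ g r + (volume (ball (c r') r' \ ball (c r) r)).toReal := by
      have := ENNReal.toReal_mono (ENNReal.add_ne_top.2 ⟨hfin r, hdtop⟩) h4
      rwa [ENNReal.toReal_add (hfin r) hdtop] at this
    have e1 : (volume (ball (c r') r' \ ball (c r) r)).toReal = κT * r'^n - κT * r^n := by
      rw [measure_diff hBB measurableSet_ball.nullMeasurableSet measure_ball_lt_top.ne,
        ENNReal.toReal_sub_of_le (measure_mono hBB) measure_ball_lt_top.ne,
        hvolT r (le_of_lt h1), hvolT r' (le_of_lt (h1.trans_le h2))]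
    rw [e1] at h5; linarith
  -- Lipschitz continuity of g on Icc ρ₀ 1
  have hlip : LipschitzOnWith (Real.toNNReal (κT * n)) g (Icc ρ₀ 1) := by
    rw [lipschitzOnWith_iff_dist_le_mul]
    intro r hr r' hr'
    rw [Real.coe_toNNReal _ (by positivity), Real.dist_eq, Real.dist_eq]
    rcases le_total r r' with h | h
    · obtain ⟨hmono, hb⟩ := hinc (hρ₀.trans_le hr.1) h hr'.2
      have hp := aux_pow_sub n (le_of_lt (hρ₀.trans_le hr.1)) h hr'.2
      rw [abs_sub_comm (g r), abs_of_nonneg (sub_nonneg.2 hmono),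
        abs_sub_comm r, abs_of_nonneg (sub_nonneg.2 h)]
      nlinarith [mul_le_mul_of_nonneg_left hp hκT0]
    · obtain ⟨hmono, hb⟩ := hinc (hρ₀.trans_le hr'.1) h hr.2
      have hp := aux_pow_sub n (le_of_lt (hρ₀.trans_le hr'.1)) h hr.2
      rw [abs_of_nonneg (sub_nonneg.2 hmono), abs_of_nonneg (sub_nonneg.2 h)]
      nlinarith [mul_le_mul_of_nonneg_left hp hκT0]
  -- continuity of ψ
  set ψ : ℝ → ℝ := fun r => g r - η * (κT * r^n) with hψ
  have hcont : ContinuousOn ψ (Icc ρ₀ 1) := by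
    apply ContinuousOn.sub hlip.continuousOn
    exact (continuous_const.mul ((continuous_const.mul (continuous_pow n)))).continuousOn
  have hψρ₀ : 0 ≤ ψ ρ₀ := by
    have hcx : c ρ₀ = x := if_pos hρ₀'
    have h1 : ENNReal.ofReal η * volume (ball (c ρ₀) ρ₀) ≤ volume (ball (c ρ₀) ρ₀ ∩ A) := by
      rw [hcx]; exact hdens
    have h2 := ENNReal.toReal_mono (hfin ρ₀) h1
    rw [ENNReal.toReal_mul, ENNReal.toReal_ofReal hη0.le, hvolT ρ₀ hρ₀.le] at h2
    simp only [hψ, sub_nonneg]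
    exact le_trans (le_of_eq rfl) h2
  have hψ1 : ψ 1 ≤ 0 := by
    have hc1 : c 1 = 0 := by
      by_cases hx0 : ‖x‖ = 0
      · have : x = 0 := norm_eq_zero.1 hx0
        simp [hc, this]
      · have : ¬ (1:ℝ) ≤ 1 - ‖x‖ := by
          push_neg
          have := norm_nonneg x
          rcases lt_or_eq_of_le this with h | h
          · linarith
          · exact absurd h.symm hx0
        simp [hc, this]
    have hB1 : ball (c 1) 1 ∩ A = A := by
      rw [hc1]; exact inter_eq_self_of_subset_right hAsub
    have h2 := ENNReal.toReal_mono (by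
        exact ENNReal.mul_ne_top ENNReal.ofReal_ne_top hκtop) hAvol
    rw [ENNReal.toReal_mul, ENNReal.toReal_ofReal hη0.le] at h2
    simp only [hψ, hg, hB1, sub_nonpos, one_pow, mul_one]
    exact h2
  -- IVT
  have hIVT := intermediate_value_Icc' hρ₀1 hcont
  have h0mem : (0:ℝ) ∈ Icc (ψ 1) (ψ ρ₀) := ⟨hψ1, hψρ₀⟩
  obtain ⟨r, hrmem, hrzero⟩ := hIVT h0mem
  have hr0 : 0 < r := hρ₀.trans_le hrmem.1
  refine ⟨c r, r, hr0, hrmem.2, ?_, hsubB1 hr0 hrmem.2, ?_⟩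
  · refine hnest hρ₀ hrmem.1 hrmem.2 ?_
    have hcx : c ρ₀ = x := if_pos hρ₀'
    rw [mem_ball, hcx, dist_self]
    exact hρ₀
  · have heq : g r = η * (κT * r^n) := by
      have : ψ r = 0 := hrzero
      simp only [hψ] at this; linarith
    have : volume (ball (c r) r ∩ A) = ENNReal.ofReal (η * (κT * r^n)) := by
      rw [← heq, hg, ENNReal.ofReal_toReal (hfin r)]
    rw [this, ENNReal.ofReal_mul hη0.le]
    congr 1
    rw [← hvolT r hr0.le, ENNReal.ofReal_toReal measure_ball_lt_top.ne]



lemma aux_dens (n : ℕ) (hn : 1 ≤ n) (η : ℝ) (hη0 : 0 < η) (hη1 : η < 1)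
    (A : Set (EuclideanSpace ℝ (Fin n))) (hAmeas : MeasurableSet A) (hAsub : A ⊆ ball 0 1) :
    volume (A \ {x | x ∈ A ∧ ∃ ρ : ℝ, 0 < ρ ∧ ρ < 1 - ‖x‖ ∧
      ENNReal.ofReal η * volume (ball x ρ) ≤ volume (ball x ρ ∩ A)}) = 0 := by
  haveI := aux_nontrivial n hn
  have hae := Besicovitch.ae_tendsto_measure_inter_div volume A
  rw [ae_iff] at hae
  have hclaim : ∀ x ∈ A, Tendsto (fun r => volume (A ∩ closedBall x r) / volume (closedBall x r))
      (𝓝[>] (0:ℝ)) (𝓝 1) → ∃ ρ : ℝ, 0 < ρ ∧ ρ < 1 - ‖x‖ ∧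
      ENNReal.ofReal η * volume (ball x ρ) ≤ volume (ball x ρ ∩ A) := by
    intro x hxA hT
    have hx1 : ‖x‖ < 1 := mem_ball_zero_iff.1 (hAsub hxA)
    have hηlt : ENNReal.ofReal η < 1 := ENNReal.ofReal_lt_one.2 hη1
    have hev1 := hT.eventually_const_lt hηlt
    have hev2 : ∀ᶠ r in 𝓝[>] (0:ℝ), r ∈ Ioo (0:ℝ) (1 - ‖x‖) :=
      eventually_of_mem (Ioo_mem_nhdsGT_of_mem ⟨le_refl 0, by linarith⟩) (fun y hy => hy)
    obtain ⟨ρ, hgt, hIoo⟩ := (hev1.and hev2).exists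
    refine ⟨ρ, hIoo.1, hIoo.2, ?_⟩
    have hcb0 : volume (closedBall x ρ) ≠ 0 := (measure_closedBall_pos volume x hIoo.1).ne'
    have hcbt : volume (closedBall x ρ) ≠ ⊤ := measure_closedBall_lt_top.ne
    have hlt : ENNReal.ofReal η * volume (closedBall x ρ) < volume (A ∩ closedBall x ρ) :=
      (ENNReal.lt_div_iff_mul_lt (Or.inl hcb0) (Or.inl hcbt)).1 hgt
    have hcbball : volume (closedBall x ρ) = volume (ball x ρ) :=
      Measure.addHaar_closedBall_eq_addHaar_ball volume x ρ
    have hsub : A ∩ closedBall x ρ ⊆ (ball x ρ ∩ A) ∪ sphere x ρ := by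
      intro z hz
      rcases lt_or_eq_of_le (mem_closedBall.1 hz.2) with h | h
      · exact Or.inl ⟨mem_ball.2 h, hz.1⟩
      · exact Or.inr (mem_sphere.2 h)
    have hle : volume (A ∩ closedBall x ρ) ≤ volume (ball x ρ ∩ A) := by
      calc volume (A ∩ closedBall x ρ) ≤ volume (ball x ρ ∩ A) + volume (sphere x ρ) :=
            (measure_mono hsub).trans (measure_union_le _ _)
        _ = volume (ball x ρ ∩ A) := by rw [Measure.addHaar_sphere volume x ρ, add_zero]
    rw [hcbball] at hlt
    exact le_of_lt (hlt.trans_le hle)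
  have hsubset : A \ {x | x ∈ A ∧ ∃ ρ : ℝ, 0 < ρ ∧ ρ < 1 - ‖x‖ ∧
      ENNReal.ofReal η * volume (ball x ρ) ≤ volume (ball x ρ ∩ A)} ⊆
      {x | ¬ Tendsto (fun r => volume (A ∩ closedBall x r) / volume (closedBall x r))
        (𝓝[>] (0:ℝ)) (𝓝 1)} ∩ A := by
    intro z hz
    refine ⟨fun hT => hz.2 ⟨hz.1, hclaim z hz.1 hT⟩, hz.1⟩
  refine le_antisymm ?_ zero_le
  calc volume (A \ _) ≤ volume ({x | ¬ Tendsto (fun r => volume (A ∩ closedBall x r) /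
        volume (closedBall x r)) (𝓝[>] (0:ℝ)) (𝓝 1)} ∩ A) := measure_mono hsubset
    _ = 0 := by rw [← Measure.restrict_apply' hAmeas]; exact hae


end InkSpotsAux

/-- Krylov's propagating ink spots lemma (balls). -/
theorem propagating_ink_spots_balls
    (n : ℕ) (hn : 1 ≤ n) (η : ℝ) (hη0 : 0 < η) (hη1 : η < 1) :
    ∃ ξ ζ : ℝ, ξ ∈ Set.Ioo (0 : ℝ) 1 ∧ 0 < ζ ∧
      ∀ A : Set (EuclideanSpace ℝ (Fin n)),
        MeasurableSet A →
        A ⊆ Metric.ball 0 1 →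
        volume A ≤ ENNReal.ofReal η * volume (Metric.ball (0 : EuclideanSpace ℝ (Fin n)) 1) →
        ENNReal.ofReal (1 + ζ) * volume A ≤
          volume (⋃ (x : EuclideanSpace ℝ (Fin n)) (ρ : ℝ)
            (_ : 0 < ρ ∧ Metric.ball x ρ ⊆ Metric.ball 0 1 ∧
              ENNReal.ofReal η * volume (Metric.ball x ρ) ≤ volume (Metric.ball x ρ ∩ A)),
            Metric.ball x (ξ * ρ)) := by
  open Metric Set Filter in
  have hn0 : (n:ℝ) ≠ 0 := by positivity
  have hb0 : (0:ℝ) < (1+η)/2 := by linarith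
  have hb1 : (1+η)/2 < 1 := by linarith
  set ξ : ℝ := ((1+η)/2) ^ (1/(n:ℝ)) with hξdef
  have hξ0 : 0 < ξ := Real.rpow_pos_of_pos hb0 _
  have hξ1 : ξ < 1 := Real.rpow_lt_one hb0.le hb1 (by positivity)
  have hξn : ξ ^ n = (1+η)/2 := by
    rw [hξdef, ← Real.rpow_natCast (((1+η)/2) ^ (1/(n:ℝ))) n, ← Real.rpow_mul hb0.le,
      one_div, inv_mul_cancel₀ hn0, Real.rpow_one]
  have hξη : 0 < ξ ^ n - η := by rw [hξn]; linarith
  set ζ : ℝ := (ξ ^ n - η) / 4^n with hζdef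
  have hζ0 : 0 < ζ := div_pos hξη (by positivity)
  refine ⟨ξ, ζ, ⟨hξ0, hξ1⟩, hζ0, ?_⟩
  intro A hAmeas hAsub hAvol
  set Atil := ⋃ (x : EuclideanSpace ℝ (Fin n)) (ρ : ℝ)
      (_ : 0 < ρ ∧ Metric.ball x ρ ⊆ Metric.ball 0 1 ∧
        ENNReal.ofReal η * volume (Metric.ball x ρ) ≤ volume (Metric.ball x ρ ∩ A)),
      Metric.ball x (ξ * ρ) with hAtildef
  have hAtilmem : ∀ (z : EuclideanSpace ℝ (Fin n)) (ρ : ℝ), 0 < ρ → ball z ρ ⊆ ball 0 1 →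
      ENNReal.ofReal η * volume (ball z ρ) ≤ volume (ball z ρ ∩ A) →
      ball z (ξ * ρ) ⊆ Atil := by
    intro z ρ h1 h2 h3 w hw
    rw [hAtildef]
    exact mem_iUnion.2 ⟨z, mem_iUnion.2 ⟨ρ, mem_iUnion.2 ⟨⟨h1, h2, h3⟩, hw⟩⟩⟩
  set D : Set (EuclideanSpace ℝ (Fin n)) := {x | x ∈ A ∧ ∃ ρ : ℝ, 0 < ρ ∧ ρ < 1 - ‖x‖ ∧
      ENNReal.ofReal η * volume (ball x ρ) ≤ volume (ball x ρ ∩ A)} with hDdef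
  have hAD : volume (A \ D) = 0 := aux_dens n hn η hη0 hη1 A hAmeas hAsub
  have hDAtil : D ⊆ Atil := by
    intro x hx
    obtain ⟨hxA, ρ, h1, h2, h3⟩ := hx
    have hnorm : (0:ℝ) ≤ ‖x‖ := norm_nonneg x
    have hsubB : ball x ρ ⊆ ball (0 : EuclideanSpace ℝ (Fin n)) 1 :=
      ball_subset_ball' (by rw [dist_zero_right]; linarith)
    exact hAtilmem x ρ h1 hsubB h3 (mem_ball_self (by positivity))
  have hball : ∀ x ∈ D, ∃ y r, 0 < r ∧ r ≤ 1 ∧ x ∈ ball y r ∧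
      ball y r ⊆ ball (0:EuclideanSpace ℝ (Fin n)) 1 ∧
      volume (ball y r ∩ A) = ENNReal.ofReal η * volume (ball y r) := by
    intro x hx
    obtain ⟨hxA, ρ, h1, h2, h3⟩ := hx
    exact exists_eq_ball n hn η hη0 A hAmeas hAsub hAvol x
      (mem_ball_zero_iff.1 (hAsub hxA)) ρ h1 h2.le h3
  choose! y r hr0 hr1 hxyr hsub1 heq using hball
  obtain ⟨u, huD, hdisj, hcover⟩ :=
    Vitali.exists_disjoint_subfamily_covering_enlargement_closedBall D y r 1
      (fun a ha => hr1 a ha) 4 (by norm_num)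
  have hucount : u.Countable := by
    apply hdisj.countable_of_nonempty_interior
    intro b hb
    rw [interior_closedBall _ (hr0 b (huD hb)).ne']
    exact nonempty_ball.2 (hr0 b (huD hb))
  set S : ℝ≥0∞ := ∑' b : u, volume (ball (y b) (r b)) with hSdef
  -- upper bound for volume A
  have hupper : volume A ≤ ENNReal.ofReal (4^n) * S := by
    have hADsub : A ⊆ D ∪ (A \ D) := fun z hz => (em (z ∈ D)).imp id (fun h => ⟨hz, h⟩)
    have hDcov : D ⊆ ⋃ b ∈ u, closedBall (y b) (4 * r b) := by
      intro z hz
      obtain ⟨b, hbu, hsubb⟩ := hcover z hz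
      exact mem_biUnion hbu (hsubb (ball_subset_closedBall (hxyr z hz)))
    have hcb : ∀ b ∈ u, volume (closedBall (y b) (4 * r b)) =
        ENNReal.ofReal (4^n) * volume (ball (y b) (r b)) := by
      intro b hb
      have h0 := hr0 b (huD hb)
      rw [Measure.addHaar_closedBall volume _ (by positivity : (0:ℝ) ≤ 4 * r b),
        finrank_euclideanSpace_fin, aux_vol_ball n hn (y b) h0.le, mul_pow,
        ENNReal.ofReal_mul (by positivity), mul_assoc]
    calc volume A ≤ volume (D ∪ (A \ D)) := measure_mono hADsub
      _ ≤ volume D + volume (A \ D) := measure_union_le _ _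
      _ = volume D := by rw [hAD, add_zero]
      _ ≤ volume (⋃ b ∈ u, closedBall (y b) (4 * r b)) := measure_mono hDcov
      _ ≤ ∑' b : u, volume (closedBall (y b) (4 * r b)) := measure_biUnion_le volume hucount _
      _ = ∑' b : u, ENNReal.ofReal (4^n) * volume (ball (y b) (r b)) :=
          tsum_congr (fun b => hcb b b.2)
      _ = ENNReal.ofReal (4^n) * S := ENNReal.tsum_mul_left
  -- lower bound per ball
  have hlow : ∀ b ∈ u, ENNReal.ofReal (ξ^n - η) * volume (ball (y b) (r b)) ≤
      volume (ball (y b) (ξ * r b) \ A) := by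
    intro b hb
    have h0 := hr0 b (huD hb)
    have hfinV : volume (ball (y b) (r b)) ≠ ⊤ := measure_ball_lt_top.ne
    have hξsub : ball (y b) (ξ * r b) ⊆ ball (y b) (r b) :=
      ball_subset_ball (by nlinarith)
    have hcover2 : ball (y b) (ξ * r b) ⊆
        (ball (y b) (ξ * r b) \ A) ∪ (ball (y b) (r b) ∩ A) := by
      intro z hz
      rcases em (z ∈ A) with h | h
      · exact Or.inr ⟨hξsub hz, h⟩
      · exact Or.inl ⟨hz, h⟩
    have hvξ : volume (ball (y b) (ξ * r b)) =
        ENNReal.ofReal (ξ^n) * volume (ball (y b) (r b)) := by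
      rw [aux_vol_ball n hn (y b) (by positivity : (0:ℝ) ≤ ξ * r b),
        aux_vol_ball n hn (y b) h0.le, mul_pow, ENNReal.ofReal_mul (by positivity), mul_assoc]
    have hmain : ENNReal.ofReal (ξ^n) * volume (ball (y b) (r b)) ≤
        volume (ball (y b) (ξ * r b) \ A) + ENNReal.ofReal η * volume (ball (y b) (r b)) := by
      calc ENNReal.ofReal (ξ^n) * volume (ball (y b) (r b)) = volume (ball (y b) (ξ * r b)) :=
            hvξ.symm
        _ ≤ volume (ball (y b) (ξ * r b) \ A) + volume (ball (y b) (r b) ∩ A) :=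
            (measure_mono hcover2).trans (measure_union_le _ _)
        _ = volume (ball (y b) (ξ * r b) \ A) + ENNReal.ofReal η * volume (ball (y b) (r b)) :=
            by rw [heq b (huD hb)]
    have hsplit : ENNReal.ofReal (ξ^n) = ENNReal.ofReal (ξ^n - η) + ENNReal.ofReal η := by
      rw [← ENNReal.ofReal_add hξη.le hη0.le, sub_add_cancel]
    rw [hsplit, add_mul] at hmain
    exact (ENNReal.add_le_add_iff_right
      (ENNReal.mul_ne_top ENNReal.ofReal_ne_top hfinV)).1 hmain
  -- final assembly
  have hAtil1 : volume A ≤ volume (A ∩ Atil) := by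
    have hsub2 : A ⊆ (A ∩ Atil) ∪ (A \ D) := by
      intro z hz
      rcases em (z ∈ D) with h | h
      · exact Or.inl ⟨hz, hDAtil h⟩
      · exact Or.inr ⟨hz, h⟩
    calc volume A ≤ volume ((A ∩ Atil) ∪ (A \ D)) := measure_mono hsub2
      _ ≤ volume (A ∩ Atil) + volume (A \ D) := measure_union_le _ _
      _ = volume (A ∩ Atil) := by rw [hAD, add_zero]
  have hTmeas : MeasurableSet (⋃ b ∈ u, ball (y b) (ξ * r b) \ A) :=
    MeasurableSet.biUnion hucount (fun b hb => measurableSet_ball.diff hAmeas)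
  have hdisj2 : u.PairwiseDisjoint (fun b => ball (y b) (ξ * r b) \ A) := by
    apply hdisj.mono
    intro b z hz
    have hz1 : dist z (y b) < ξ * r b := mem_ball.1 hz.1
    have hd : (0:ℝ) ≤ dist z (y b) := dist_nonneg
    rw [mem_closedBall]
    rcases le_or_gt 0 (r b) with h | h
    · nlinarith
    · nlinarith [mul_pos hξ0 (neg_pos.2 h)]
  have hdisjAT : Disjoint (A ∩ Atil) (⋃ b ∈ u, ball (y b) (ξ * r b) \ A) := by
    rw [disjoint_left]
    intro z hz1 hz2
    obtain ⟨b, hb, hzb⟩ := mem_iUnion₂.1 hz2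
    exact hzb.2 hz1.1
  have hsubAtil : (A ∩ Atil) ∪ (⋃ b ∈ u, ball (y b) (ξ * r b) \ A) ⊆ Atil := by
    apply union_subset inter_subset_right
    apply iUnion₂_subset
    intro b hb
    exact diff_subset.trans (hAtilmem (y b) (r b) (hr0 b (huD hb)) (hsub1 b (huD hb))
      (le_of_eq (heq b (huD hb)).symm))
  have hbUnion : volume (⋃ b ∈ u, ball (y b) (ξ * r b) \ A) =
      ∑' b : u, volume (ball (y b) (ξ * r b) \ A) :=
    measure_biUnion hucount hdisj2 (fun b hb => measurableSet_ball.diff hAmeas)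
  have hSlow : ENNReal.ofReal ζ * volume A ≤ ∑' b : u, volume (ball (y b) (ξ * r b) \ A) := by
    have h1 : ENNReal.ofReal (ξ^n - η) * S ≤ ∑' b : u, volume (ball (y b) (ξ * r b) \ A) := by
      rw [hSdef, ← ENNReal.tsum_mul_left]
      exact ENNReal.tsum_le_tsum (fun b => hlow b b.2)
    have h2 : volume A / ENNReal.ofReal (4^n) ≤ S :=
      ENNReal.div_le_of_le_mul (by rwa [mul_comm] at hupper)
    have h3 : ENNReal.ofReal ζ * volume A =
        ENNReal.ofReal (ξ^n - η) * (volume A / ENNReal.ofReal (4^n)) := by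
      rw [hζdef, ENNReal.ofReal_div_of_pos (by positivity), div_eq_mul_inv, div_eq_mul_inv]
      ring
    calc ENNReal.ofReal ζ * volume A =
        ENNReal.ofReal (ξ^n - η) * (volume A / ENNReal.ofReal (4^n)) := h3
      _ ≤ ENNReal.ofReal (ξ^n - η) * S := mul_le_mul_right h2 _
      _ ≤ _ := h1
  calc ENNReal.ofReal (1 + ζ) * volume A = (1 + ENNReal.ofReal ζ) * volume A := by
        rw [ENNReal.ofReal_add zero_le_one hζ0.le, ENNReal.ofReal_one]
    _ = volume A + ENNReal.ofReal ζ * volume A := by rw [add_mul, one_mul]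
    _ ≤ volume (A ∩ Atil) + ∑' b : u, volume (ball (y b) (ξ * r b) \ A) :=
        add_le_add hAtil1 hSlow
    _ = volume ((A ∩ Atil) ∪ (⋃ b ∈ u, ball (y b) (ξ * r b) \ A)) := by
        rw [measure_union hdisjAT hTmeas, hbUnion]
    _ ≤ volume Atil := measure_mono hsubAtil
end

section
/- Propagating ink spots lemma, cube version. There exists a constant c₀ = c₀(n) ∈ (0,1), depending only on the dimension n, such that the following holds. Let Q = (0,1)ⁿ be the open unit cube, let α ∈ (0,1), and let A ⊆ B ⊆ Q be Lebesgue-measurable sets with |A| ≤ (1−α)·|Q|. Suppose that for every open axis-parallel subcube Q' ⊆ Q (i.e. Q' a translate of (0,ρ)ⁿ for some ρ > 0 contained in Q): if |Q' ∩ A| ≥ (1−α)·|Q'| then Q' ⊆ B. Then |A| ≤ (1−c₀·α)·|B|. -/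
open MeasureTheory
open scoped ENNReal

/-- An open axis-parallel cube with lower corner `c` and side `ρ`,
i.e. a translate of `(0,ρ)ⁿ`. -/
def openCube (n : ℕ) (c : EuclideanSpace ℝ (Fin n)) (ρ : ℝ) :
    Set (EuclideanSpace ℝ (Fin n)) :=
  {x | ∀ i : Fin n, c i < x i ∧ x i < c i + ρ}

open Metric Set Filter
open scoped Topology

variable {n : ℕ}

lemma openCube_eq_preimage (c : EuclideanSpace ℝ (Fin n)) (ρ : ℝ) :
    openCube n c ρ = (MeasurableEquiv.toLp 2 (Fin n → ℝ)).symm ⁻¹'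
      (Set.pi Set.univ fun i => Ioo (c i) (c i + ρ)) := by
  ext x
  simp [openCube, MeasurableEquiv.coe_toLp_symm, Set.mem_pi]

lemma volume_openCube (c : EuclideanSpace ℝ (Fin n)) {ρ : ℝ} (hρ : 0 ≤ ρ) :
    volume (openCube n c ρ) = ENNReal.ofReal (ρ ^ n) := by
  rw [openCube_eq_preimage,
    (EuclideanSpace.volume_preserving_symm_measurableEquiv_toLp (Fin n)).measure_preimage
      (MeasurableSet.univ_pi fun i => measurableSet_Ioo).nullMeasurableSet]
  rw [volume_pi_pi]
  simp [Real.volume_Ioo, ← ENNReal.ofReal_pow hρ]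

lemma measurableSet_openCube (c : EuclideanSpace ℝ (Fin n)) (ρ : ℝ) :
    MeasurableSet (openCube n c ρ) := by
  rw [openCube_eq_preimage]
  exact (MeasurableEquiv.toLp 2 (Fin n → ℝ)).symm.measurable
    (MeasurableSet.univ_pi fun i => measurableSet_Ioo)

lemma isOpen_openCube (c : EuclideanSpace ℝ (Fin n)) (ρ : ℝ) :
    IsOpen (openCube n c ρ) := by
  have : openCube n c ρ = ⋂ i, {x : EuclideanSpace ℝ (Fin n) | c i < x i ∧ x i < c i + ρ} := by
    ext x; simp [openCube]
  rw [this]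
  exact isOpen_iInter_of_finite fun i =>
    ((isOpen_lt continuous_const (EuclideanSpace.proj i).continuous).inter
      (isOpen_lt (EuclideanSpace.proj i).continuous continuous_const))

lemma volume_openCube_ne_top (c : EuclideanSpace ℝ (Fin n)) {ρ : ℝ} (hρ : 0 ≤ ρ) :
    volume (openCube n c ρ) ≠ ⊤ := by
  rw [volume_openCube c hρ]; exact ENNReal.ofReal_ne_top

noncomputable def cornerF (x : EuclideanSpace ℝ (Fin n)) (ρ t : ℝ) : EuclideanSpace ℝ (Fin n) :=
  WithLp.toLp 2 fun i => min (x i - ρ / 2) (1 - t)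

lemma cubeF_mono (x : EuclideanSpace ℝ (Fin n)) (ρ : ℝ) {s t : ℝ} (hst : s ≤ t) :
    openCube n (cornerF x ρ s) s ⊆ openCube n (cornerF x ρ t) t := by
  intro y hy i
  obtain ⟨h1, h2⟩ := hy i
  constructor
  · exact lt_of_le_of_lt (min_le_min le_rfl (by linarith)) h1
  · calc y i < min (x i - ρ/2) (1 - s) + s := h2
    _ = min (x i - ρ/2 + s) 1 := by rw [← min_add_add_right, sub_add_cancel]
    _ ≤ min (x i - ρ/2 + t) 1 := min_le_min (by linarith) le_rfl
    _ = min (x i - ρ/2) (1 - t) + t := by rw [← min_add_add_right, sub_add_cancel]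

lemma cubeF_subset_Q {x : EuclideanSpace ℝ (Fin n)} {ρ t : ℝ}
    (hc : ∀ i, ρ / 2 ≤ x i) (ht : t ≤ 1) :
    openCube n (cornerF x ρ t) t ⊆ openCube n 0 1 := by
  intro y hy i
  obtain ⟨h1, h2⟩ := hy i
  have h0 : (0 : EuclideanSpace ℝ (Fin n)) i = 0 := rfl
  rw [h0]
  constructor
  · refine lt_of_le_of_lt ?_ h1
    exact le_min (by linarith [hc i]) (by linarith)
  · have : cornerF x ρ t i + t = min (x i - ρ/2 + t) 1 := by
      unfold cornerF
      rw [← min_add_add_right, sub_add_cancel]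
    rw [this] at h2
    exact lt_of_lt_of_le h2 (by simp [min_le_right])

lemma cornerF_at_rho {x : EuclideanSpace ℝ (Fin n)} {ρ : ℝ}
    (h : ∀ i, x i + ρ / 2 ≤ 1) :
    cornerF x ρ ρ = WithLp.toLp 2 (fun i => x i - ρ / 2) := by
  ext i
  exact min_eq_left (by linarith [h i])

lemma cubeF_at_one {x : EuclideanSpace ℝ (Fin n)} {ρ : ℝ}
    (hc : ∀ i, ρ / 2 ≤ x i) :
    openCube n (cornerF x ρ 1) 1 = openCube n 0 1 := by
  have : cornerF x ρ 1 = (0 : EuclideanSpace ℝ (Fin n)) := by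
    ext i
    show min (x i - ρ / 2) (1 - 1) = _
    rw [min_eq_right (by linarith [hc i])]
    norm_num
  rw [this]

lemma volCube_chain {A : Set (EuclideanSpace ℝ (Fin n))} (x : EuclideanSpace ℝ (Fin n)) (ρ : ℝ)
    {s t : ℝ} (hs : 0 ≤ s) (hst : s ≤ t) :
    (volume (openCube n (cornerF x ρ t) t ∩ A)).toReal ≤
      (volume (openCube n (cornerF x ρ s) s ∩ A)).toReal + (t ^ n - s ^ n) := by
  set Cs := openCube n (cornerF x ρ s) s
  set Ct := openCube n (cornerF x ρ t) t
  have hsub : Cs ⊆ Ct := cubeF_mono x ρ hst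
  have hd : volume (Ct \ Cs) = ENNReal.ofReal (t ^ n - s ^ n) := by
    rw [measure_diff hsub (measurableSet_openCube _ _).nullMeasurableSet
      (volume_openCube_ne_top _ hs), volume_openCube _ hs, volume_openCube _ (hs.trans hst),
      ← ENNReal.ofReal_sub _ (pow_nonneg hs n)]
  have h1 : volume (Ct ∩ A) ≤ volume (Cs ∩ A) + ENNReal.ofReal (t ^ n - s ^ n) := by
    rw [← hd]
    refine le_trans (measure_mono ?_) (measure_union_le _ _)
    intro y ⟨hy1, hy2⟩
    by_cases h : y ∈ Cs
    · exact Or.inl ⟨h, hy2⟩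
    · exact Or.inr ⟨hy1, h⟩
  have hfin : volume (Cs ∩ A) ≠ ⊤ :=
    fun h => volume_openCube_ne_top (cornerF x ρ s) hs
      (top_le_iff.1 (h ▸ measure_mono inter_subset_left))
  calc (volume (Ct ∩ A)).toReal
      ≤ ((volume (Cs ∩ A)) + ENNReal.ofReal (t ^ n - s ^ n)).toReal := by
        exact ENNReal.toReal_mono (by simp [ENNReal.add_ne_top, hfin]) h1
    _ = (volume (Cs ∩ A)).toReal + (t ^ n - s ^ n) := by
        rw [ENNReal.toReal_add hfin ENNReal.ofReal_ne_top,
          ENNReal.toReal_ofReal (by nlinarith [pow_le_pow_left₀ hs hst n])]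

lemma volCube_mono {A : Set (EuclideanSpace ℝ (Fin n))} (x : EuclideanSpace ℝ (Fin n)) (ρ : ℝ)
    {s t : ℝ} (ht : 0 ≤ t) (hst : s ≤ t) :
    (volume (openCube n (cornerF x ρ s) s ∩ A)).toReal ≤
      (volume (openCube n (cornerF x ρ t) t ∩ A)).toReal := by
  refine ENNReal.toReal_mono ?_ (measure_mono (inter_subset_inter_left _ (cubeF_mono x ρ hst)))
  exact fun h => volume_openCube_ne_top (cornerF x ρ t) ht
    (top_le_iff.1 (h ▸ measure_mono inter_subset_left))

lemma continuousOn_volCube {A : Set (EuclideanSpace ℝ (Fin n))}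
    (x : EuclideanSpace ℝ (Fin n)) (ρ : ℝ) :
    ContinuousOn (fun t => (volume (openCube n (cornerF x ρ t) t ∩ A)).toReal) (Icc 0 1) := by
  set H := fun t => (volume (openCube n (cornerF x ρ t) t ∩ A)).toReal with hH
  rw [Metric.continuousOn_iff]
  intro b hb ε hε
  obtain ⟨δ, hδ, hdd⟩ := Metric.continuous_iff.1 (continuous_pow n) b ε hε
  refine ⟨δ, hδ, fun a ha hab => ?_⟩
  have key : ∀ u v : ℝ, u ∈ Icc (0:ℝ) 1 → v ∈ Icc (0:ℝ) 1 → u ≤ v →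
      |H v - H u| ≤ |v ^ n - u ^ n| := by
    intro u v hu hv huv
    have h1 := volCube_chain (A := A) x ρ hu.1 huv
    have h2 := volCube_mono (A := A) x ρ hv.1 huv
    rw [abs_le]
    constructor
    · have : (0:ℝ) ≤ v ^ n - u ^ n := by nlinarith [pow_le_pow_left₀ hu.1 huv n]
      rw [abs_of_nonneg this]; linarith
    · rw [abs_of_nonneg (by nlinarith [pow_le_pow_left₀ hu.1 huv n])]; linarith
  have : dist (H a) (H b) ≤ dist (a ^ n) (b ^ n) := by
    rcases le_total a b with h | h
    · rw [Real.dist_eq, Real.dist_eq, abs_sub_comm (H a), abs_sub_comm (a^n)]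
      exact key a b ha hb h
    · rw [Real.dist_eq, Real.dist_eq]
      exact key b a hb ha h
  exact lt_of_le_of_lt this (hdd a hab)

lemma cube_subset_closedBall (x : EuclideanSpace ℝ (Fin n)) {ρ : ℝ} (hρ : 0 ≤ ρ) :
    openCube n (WithLp.toLp 2 fun i => x i - ρ / 2) ρ ⊆ closedBall x (Real.sqrt n * ρ / 2) := by
  intro y hy
  rw [mem_closedBall, EuclideanSpace.dist_eq]
  have hb : ∀ i, dist (y i) (x i) ^ 2 ≤ (ρ / 2) ^ 2 := by
    intro i
    obtain ⟨h1, h2⟩ := hy i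
    have : |y i - x i| ≤ ρ / 2 := abs_le.2 ⟨by linarith, by linarith⟩
    calc dist (y i) (x i) ^ 2 = |y i - x i| ^ 2 := by rw [Real.dist_eq, sq_abs]
    _ ≤ (ρ / 2) ^ 2 := by nlinarith [abs_nonneg (y i - x i)]
  calc Real.sqrt (∑ i, dist (y i) (x i) ^ 2) ≤ Real.sqrt (∑ _i : Fin n, (ρ / 2) ^ 2) :=
        Real.sqrt_le_sqrt (Finset.sum_le_sum fun i _ => hb i)
    _ = Real.sqrt (n * (ρ / 2) ^ 2) := by rw [Finset.sum_const]; simp [mul_comm]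
    _ = Real.sqrt n * (ρ / 2) := by
        rw [Real.sqrt_mul (Nat.cast_nonneg n), Real.sqrt_sq (by linarith)]
    _ = Real.sqrt n * ρ / 2 := by ring

lemma exists_good_cube (hn : 1 ≤ n) {α : ℝ} (hα0 : 0 < α) (hα1 : α < 1)
    {A B : Set (EuclideanSpace ℝ (Fin n))} (hA : MeasurableSet A) (hAB : A ⊆ B)
    (hBQ : B ⊆ openCube n 0 1) (hlt : (volume A).toReal < 1 - α)
    (hyp : ∀ c ρ, 0 < ρ → openCube n c ρ ⊆ openCube n 0 1 →
      ENNReal.ofReal (1 - α) * volume (openCube n c ρ) ≤ volume (openCube n c ρ ∩ A) →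
      openCube n c ρ ⊆ B)
    (x : EuclideanSpace ℝ (Fin n)) (hxA : x ∈ A)
    (hx : Tendsto (fun r => volume (A ∩ closedBall x r) / volume (closedBall x r)) (𝓝[>] 0)
      (𝓝 1)) :
    ∃ c t, 0 < t ∧ t ≤ 1 ∧ x ∈ openCube n c t ∧ openCube n c t ⊆ B ∧
      volume (openCube n c t \ A) = ENNReal.ofReal α * volume (openCube n c t) := by
  haveI : Nonempty (Fin n) := ⟨⟨0, by omega⟩⟩
  have hxQ : ∀ i, 0 < x i ∧ x i < 1 := by
    intro i
    have h := hBQ (hAB hxA) i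
    simpa using h
  -- constants
  set κ : ℝ≥0∞ := volume (ball (0 : EuclideanSpace ℝ (Fin n)) 1) with hκ
  have hκtop : κ ≠ ⊤ := (measure_ball_lt_top).ne
  set k : ℝ := κ.toReal + 1 with hk
  have hk1 : 1 ≤ k := le_add_of_nonneg_left ENNReal.toReal_nonneg
  have hκk : κ ≤ ENNReal.ofReal k := by
    rw [← ENNReal.ofReal_toReal hκtop]
    exact ENNReal.ofReal_le_ofReal (by simp [hk])
  set sn : ℝ := Real.sqrt n with hsn
  have hsn0 : 0 < sn := Real.sqrt_pos.2 (by exact_mod_cast Nat.pos_of_ne_zero (by omega))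
  set α' : ℝ := min (α * (2 / sn) ^ n / k) α with hα'
  have hα'0 : 0 < α' := lt_min (by positivity) hα0
  have hα'1 : α' ≤ α := min_le_right _ _
  -- pick a small radius
  set m₁ : ℝ := Finset.univ.inf' Finset.univ_nonempty (fun i => min (x i) (1 - x i)) with hm₁
  have hm₁0 : 0 < m₁ := by
    rw [hm₁, Finset.lt_inf'_iff]
    exact fun i _ => lt_min (hxQ i).1 (by linarith [(hxQ i).2])
  set m : ℝ := min m₁ (1 / 2) with hm
  have hm0 : 0 < m := lt_min hm₁0 (by norm_num)
  have e1 : ∀ᶠ r in 𝓝[>] (0 : ℝ), ENNReal.ofReal (1 - α') <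
      volume (A ∩ closedBall x r) / volume (closedBall x r) :=
    hx.eventually (lt_mem_nhds (ENNReal.ofReal_lt_one.2 (by linarith)))
  have e2 : ∀ᶠ r in 𝓝[>] (0 : ℝ), r ∈ Ioo (0 : ℝ) (sn * m) :=
    Ioo_mem_nhdsGT_of_mem ⟨le_refl 0, by positivity⟩
  obtain ⟨r, hratio, hr0, hrm⟩ := (e1.and e2).exists
  set ρ : ℝ := 2 * r / sn with hρ
  have hρ0 : 0 < ρ := div_pos (by linarith) hsn0
  have hrsn : r / sn < m := (div_lt_iff₀ hsn0).2 (by linarith [(mul_comm m sn) ▸ hrm])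
  have hρhalf : ρ / 2 = r / sn := by rw [hρ]; ring
  have hρ2 : ∀ i, ρ / 2 ≤ x i := by
    intro i
    have h1 : m₁ ≤ min (x i) (1 - x i) := Finset.inf'_le _ (Finset.mem_univ i)
    have := min_le_left (x i) (1 - x i)
    rw [hρhalf]
    calc r / sn ≤ m := hrsn.le
    _ ≤ m₁ := min_le_left _ _
    _ ≤ x i := le_trans h1 (min_le_left _ _)
  have hρ2' : ∀ i, x i + ρ / 2 ≤ 1 := by
    intro i
    have h1 : m₁ ≤ min (x i) (1 - x i) := Finset.inf'_le _ (Finset.mem_univ i)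
    have h2 : r / sn ≤ 1 - x i :=
      le_trans hrsn.le (le_trans (min_le_left _ _) (le_trans h1 (min_le_right _ _)))
    rw [hρhalf]; linarith
  have hρ1 : ρ ≤ 1 := by
    have : r / sn ≤ 1 / 2 := le_trans hrsn.le (min_le_right _ _)
    rw [hρ]; rw [div_le_iff₀ hsn0] at this ⊢; linarith
  -- ball measures
  have hballvol : volume (closedBall x r) = ENNReal.ofReal (r ^ n) * κ := by
    rw [Measure.addHaar_closedBall volume x hr0.le, finrank_euclideanSpace_fin]
  have hballpos : volume (closedBall x r) ≠ 0 := (measure_closedBall_pos volume x hr0).ne'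
  have hballtop : volume (closedBall x r) ≠ ⊤ := measure_closedBall_lt_top.ne
  have hAcb : ENNReal.ofReal (1 - α') * volume (closedBall x r) ≤
      volume (A ∩ closedBall x r) := by
    have := (ENNReal.lt_div_iff_mul_lt (Or.inl hballpos) (Or.inl hballtop)).1 hratio
    exact this.le
  -- the small cube
  set Qx := openCube n (WithLp.toLp 2 fun i => x i - ρ / 2) ρ with hQx
  have hQxball : Qx ⊆ closedBall x r := by
    have h : sn * ρ / 2 = r := by rw [hρ]; field_simp
    rw [hQx, ← h]
    exact cube_subset_closedBall x hρ0.le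
  have hQxdiff : volume (Qx \ A) ≤ ENNReal.ofReal (α * ρ ^ n) := by
    have hdisj : Disjoint (Qx \ A) (A ∩ closedBall x r) :=
      Disjoint.mono_right inter_subset_left (disjoint_sdiff_left (s := A) (t := Qx))
    have hsub : (Qx \ A) ∪ (A ∩ closedBall x r) ⊆ closedBall x r := by
      rintro y (⟨h1, _⟩ | ⟨_, h2⟩)
      · exact hQxball h1
      · exact h2
    have hu : volume (Qx \ A) + volume (A ∩ closedBall x r) ≤ volume (closedBall x r) := by
      rw [← measure_union hdisj (hA.inter measurableSet_closedBall)]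
      exact measure_mono hsub
    have hsplit : volume (closedBall x r) =
        ENNReal.ofReal (1 - α') * volume (closedBall x r) +
        ENNReal.ofReal α' * volume (closedBall x r) := by
      rw [← add_mul, ← ENNReal.ofReal_add (by linarith) hα'0.le, sub_add_cancel,
        ENNReal.ofReal_one, one_mul]
    have h2 : volume (Qx \ A) + ENNReal.ofReal (1 - α') * volume (closedBall x r) ≤
        ENNReal.ofReal α' * volume (closedBall x r) +
        ENNReal.ofReal (1 - α') * volume (closedBall x r) := by
      calc volume (Qx \ A) + ENNReal.ofReal (1 - α') * volume (closedBall x r)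
          ≤ volume (Qx \ A) + volume (A ∩ closedBall x r) := add_le_add_right hAcb _
        _ ≤ volume (closedBall x r) := hu
        _ = _ := by conv_lhs => rw [hsplit, add_comm]
    have h3 : volume (Qx \ A) ≤ ENNReal.ofReal α' * volume (closedBall x r) :=
      (ENNReal.add_le_add_iff_right
        (ENNReal.mul_ne_top ENNReal.ofReal_ne_top hballtop)).1 h2
    calc volume (Qx \ A) ≤ ENNReal.ofReal α' * volume (closedBall x r) := h3
      _ = ENNReal.ofReal α' * (ENNReal.ofReal (r ^ n) * κ) := by rw [hballvol]
      _ ≤ ENNReal.ofReal α' * (ENNReal.ofReal (r ^ n) * ENNReal.ofReal k) :=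
          mul_le_mul_right (mul_le_mul_right hκk _) _
      _ = ENNReal.ofReal (α' * (r ^ n * k)) := by
          rw [← ENNReal.ofReal_mul (pow_nonneg hr0.le n), ← ENNReal.ofReal_mul hα'0.le]
      _ ≤ ENNReal.ofReal (α * ρ ^ n) := by
          apply ENNReal.ofReal_le_ofReal
          have h4 : α' ≤ α * (2 / sn) ^ n / k := min_le_left _ _
          have h5 : ρ ^ n = (2 / sn) ^ n * r ^ n := by
            rw [← mul_pow]; congr 1; rw [hρ]; ring
          have hk0 : (0:ℝ) < k := by linarith
          rw [h5]
          calc α' * (r ^ n * k) ≤ (α * (2 / sn) ^ n / k) * (r ^ n * k) :=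
                mul_le_mul_of_nonneg_right h4 (by positivity)
            _ = α * ((2 / sn) ^ n * r ^ n) := by field_simp
  -- the moving family and IVT
  set φ := fun t => (volume (openCube n (cornerF x ρ t) t ∩ A)).toReal - (1 - α) * t ^ n with hφ
  have hcρ : openCube n (cornerF x ρ ρ) ρ = Qx := by
    rw [cornerF_at_rho hρ2']
  have hQxA : volume (Qx ∩ A) + volume (Qx \ A) = ENNReal.ofReal (ρ ^ n) := by
    rw [measure_inter_add_diff Qx hA, hQx, volume_openCube _ hρ0.le]
  have hfinQx : volume Qx ≠ ⊤ := by rw [hQx]; exact volume_openCube_ne_top _ hρ0.le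
  have hfinQxA : volume (Qx ∩ A) ≠ ⊤ := fun h =>
    hfinQx (top_le_iff.1 (h ▸ measure_mono inter_subset_left))
  have hfinQxD : volume (Qx \ A) ≠ ⊤ := fun h =>
    hfinQx (top_le_iff.1 (h ▸ measure_mono diff_subset))
  have hφρ : 0 ≤ φ ρ := by
    have htr : (volume (Qx ∩ A)).toReal + (volume (Qx \ A)).toReal = ρ ^ n := by
      rw [← ENNReal.toReal_add hfinQxA hfinQxD, hQxA,
        ENNReal.toReal_ofReal (pow_nonneg hρ0.le n)]
    have hdle : (volume (Qx \ A)).toReal ≤ α * ρ ^ n := by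
      refine le_trans (ENNReal.toReal_mono ENNReal.ofReal_ne_top hQxdiff) ?_
      rw [ENNReal.toReal_ofReal (by positivity)]
    simp only [hφ, hcρ]
    nlinarith [pow_nonneg hρ0.le n]
  have hφ1 : φ 1 < 0 := by
    have hC1 : openCube n (cornerF x ρ 1) 1 = openCube n 0 1 := cubeF_at_one hρ2
    have hiA : openCube n (cornerF x ρ 1) 1 ∩ A = A := by
      rw [hC1]; exact inter_eq_self_of_subset_right (fun y hy => hBQ (hAB hy))
    simp only [hφ, hiA, one_pow, mul_one]
    linarith
  have hcont : ContinuousOn φ (Icc ρ 1) := by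
    apply ContinuousOn.sub
      ((continuousOn_volCube x ρ).mono (Icc_subset_Icc hρ0.le le_rfl))
    exact (continuous_const.mul (continuous_pow n)).continuousOn
  have h0mem : (0:ℝ) ∈ Icc (φ 1) (φ ρ) := ⟨hφ1.le, hφρ⟩
  obtain ⟨t, ht, hφt⟩ := intermediate_value_Icc' hρ1 hcont h0mem
  have ht0 : 0 < t := lt_of_lt_of_le hρ0 ht.1
  have ht1 : t ≤ 1 := ht.2
  have hCfin : volume (openCube n (cornerF x ρ t) t ∩ A) ≠ ⊤ := fun h =>
    volume_openCube_ne_top _ ht0.le (top_le_iff.1 (h ▸ measure_mono inter_subset_left))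
  have hvol : volume (openCube n (cornerF x ρ t) t ∩ A) = ENNReal.ofReal ((1 - α) * t ^ n) := by
    have heq : (volume (openCube n (cornerF x ρ t) t ∩ A)).toReal = (1 - α) * t ^ n := by
      simp only [hφ] at hφt; linarith
    rw [← ENNReal.ofReal_toReal hCfin, heq]
  have hsubQ : openCube n (cornerF x ρ t) t ⊆ openCube n 0 1 := cubeF_subset_Q hρ2 ht1
  have hCB : openCube n (cornerF x ρ t) t ⊆ B := by
    apply hyp _ t ht0 hsubQ
    rw [hvol, volume_openCube _ ht0.le, ← ENNReal.ofReal_mul (by linarith)]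
  have hdiffeq : volume (openCube n (cornerF x ρ t) t \ A) =
      ENNReal.ofReal α * volume (openCube n (cornerF x ρ t) t) := by
    have hsum : volume (openCube n (cornerF x ρ t) t ∩ A) +
        volume (openCube n (cornerF x ρ t) t \ A) = ENNReal.ofReal (t ^ n) := by
      rw [measure_inter_add_diff _ hA, volume_openCube _ ht0.le]
    rw [hvol] at hsum
    have hrr : ENNReal.ofReal ((1-α) * t^n) + volume (openCube n (cornerF x ρ t) t \ A) =
        ENNReal.ofReal ((1-α)*t^n) + ENNReal.ofReal (α * t^n) := by
      rw [hsum, ← ENNReal.ofReal_add (by nlinarith [pow_nonneg ht0.le n]) (by positivity)]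
      ring_nf
    have h2 := (ENNReal.add_right_inj ENNReal.ofReal_ne_top).1 hrr
    rw [h2, volume_openCube _ ht0.le, ← ENNReal.ofReal_mul hα0.le]
  have hxC : x ∈ openCube n (cornerF x ρ t) t := by
    apply cubeF_mono x ρ ht.1
    rw [hcρ]
    exact fun i => ⟨by simp; linarith, by simp; linarith⟩
  exact ⟨cornerF x ρ t, t, ht0, ht1, hxC, hCB, hdiffeq⟩

lemma cube_in_enlargement {c1 c2 : EuclideanSpace ℝ (Fin n)} {s1 s2 : ℝ} (hs2 : 0 < s2)
    (hint : (openCube n c1 s1 ∩ openCube n c2 s2).Nonempty) (hle : s1 ≤ 2 * s2) :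
    openCube n c1 s1 ⊆ openCube n (WithLp.toLp 2 fun i => c2 i - 2 * s2) (5 * s2) := by
  obtain ⟨z, hz1, hz2⟩ := hint
  intro y hy i
  obtain ⟨ha1, ha2⟩ := hy i
  obtain ⟨hb1, hb2⟩ := hz1 i
  obtain ⟨hc1, hc2⟩ := hz2 i
  constructor
  · have : z i - s1 < c1 i := by linarith
    simp only []
    linarith
  · simp only []
    linarith


/-- Propagating ink spots lemma, cube version. -/
theorem propagating_ink_spots_cubes
    (n : ℕ) (hn : 1 ≤ n) :
    ∃ c₀ : ℝ, c₀ ∈ Set.Ioo (0 : ℝ) 1 ∧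
      ∀ α : ℝ, α ∈ Set.Ioo (0 : ℝ) 1 →
        ∀ A B : Set (EuclideanSpace ℝ (Fin n)),
          MeasurableSet A → MeasurableSet B →
          A ⊆ B → B ⊆ openCube n 0 1 →
          volume A ≤ ENNReal.ofReal (1 - α) * volume (openCube n 0 1) →
          (∀ (c : EuclideanSpace ℝ (Fin n)) (ρ : ℝ), 0 < ρ →
            openCube n c ρ ⊆ openCube n 0 1 →
            ENNReal.ofReal (1 - α) * volume (openCube n c ρ) ≤ volume (openCube n c ρ ∩ A) →
            openCube n c ρ ⊆ B) →
          volume A ≤ ENNReal.ofReal (1 - c₀ * α) * volume B := by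
  set e : ℝ := (5 : ℝ) ^ n with hee
  have he1 : (1:ℝ) ≤ e := one_le_pow₀ (by norm_num : (1:ℝ) ≤ 5)
  have he0 : (0:ℝ) < e := by linarith
  refine ⟨1 / (2 * e), ⟨by positivity, ?_⟩, ?_⟩
  · rw [div_lt_one (by linarith)]; linarith
  intro α hα A B hA hB hAB hBQ hAle hyp
  obtain ⟨hα0, hα1⟩ := hα
  have hc₀α : 1 / (2 * e) * α ≤ α := by
    have h1 : 1 / (2 * e) ≤ 1 := by rw [div_le_one (by linarith)]; linarith
    nlinarith
  have hc₀α0 : 0 < 1 / (2 * e) * α := by positivity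
  have hQvol : volume (openCube n (0 : EuclideanSpace ℝ (Fin n)) 1) = 1 := by
    rw [volume_openCube _ zero_le_one, one_pow, ENNReal.ofReal_one]
  rw [hQvol, mul_one] at hAle
  have hAQ : A ⊆ openCube n 0 1 := hAB.trans hBQ
  by_cases hcase : ENNReal.ofReal (1 - α) ≤ volume A
  · -- B is the whole cube
    have hQB : openCube n (0 : EuclideanSpace ℝ (Fin n)) 1 ⊆ B := by
      refine hyp 0 1 one_pos le_rfl ?_
      rw [hQvol, mul_one, inter_eq_self_of_subset_right hAQ]
      exact hcase
    have hBeq : B = openCube n 0 1 := subset_antisymm hBQ hQB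
    rw [hBeq, hQvol, mul_one]
    refine le_trans hAle (ENNReal.ofReal_le_ofReal (by linarith))
  · push_neg at hcase
    have hAfin : volume A ≠ ⊤ := ne_top_of_lt (lt_of_lt_of_le hcase le_top)
    have hltr : (volume A).toReal < 1 - α := by
      have h := (ENNReal.toReal_lt_toReal hAfin ENNReal.ofReal_ne_top).2 hcase
      rwa [ENNReal.toReal_ofReal (by linarith)] at h
    -- good set
    set G := {x | x ∈ A ∧ Filter.Tendsto
      (fun r => volume (A ∩ closedBall x r) / volume (closedBall x r)) (𝓝[>] 0) (𝓝 1)} with hG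
    have hGnull : volume (A \ G) = 0 := by
      have hae := Besicovitch.ae_tendsto_measure_inter_div volume A
      rw [Filter.eventually_iff, mem_ae_iff] at hae
      rw [Measure.restrict_apply' hA] at hae
      refine measure_mono_null ?_ hae
      intro y ⟨hy1, hy2⟩
      exact ⟨fun h => hy2 ⟨hy1, h⟩, hy1⟩
    have hchoice : ∀ x ∈ G, ∃ c t, 0 < t ∧ t ≤ 1 ∧ x ∈ openCube n c t ∧
        openCube n c t ⊆ B ∧
        volume (openCube n c t \ A) = ENNReal.ofReal α * volume (openCube n c t) :=
      fun x hx => exists_good_cube hn hα0 hα1 hA hAB hBQ hltr hyp x hx.1 hx.2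
    choose! cc tt h1 h2 h3 h4 h5 using hchoice
    obtain ⟨u, huG, hdisj, hcover⟩ := Vitali.exists_disjoint_subfamily_covering_enlargement
      (fun x => openCube n (cc x) (tt x)) G tt 2 one_lt_two
      (fun a ha => (h1 a ha).le) 1 (fun a ha => h2 a ha) (fun a ha => ⟨a, h3 a ha⟩)
    have hucnt : u.Countable :=
      Set.PairwiseDisjoint.countable_of_isOpen hdisj
        (fun a _ => isOpen_openCube _ _) (fun a ha => ⟨a, h3 a (huG ha)⟩)
    set S := ∑' b : u, volume (openCube n (cc b) (tt b)) with hS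
    -- upper bound for volume A
    have hsum1 : volume A ≤ ENNReal.ofReal e * S := by
      have hcov2 : A ⊆ (A \ G) ∪ ⋃ b ∈ u, openCube n (WithLp.toLp 2 fun i => cc b i - 2 * tt b) (5 * tt b) := by
        intro y hy
        by_cases hyG : y ∈ G
        · right
          obtain ⟨b, hbu, hint, hδ⟩ := hcover y hyG
          refine Set.mem_biUnion hbu ?_
          exact cube_in_enlargement (h1 b (huG hbu)) hint hδ (h3 y hyG)
        · exact Or.inl ⟨hy, hyG⟩
      calc volume A ≤ volume ((A \ G) ∪ ⋃ b ∈ u, openCube n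
            (WithLp.toLp 2 fun i => cc b i - 2 * tt b) (5 * tt b)) := measure_mono hcov2
        _ ≤ volume (A \ G) + volume (⋃ b ∈ u, openCube n
            (WithLp.toLp 2 fun i => cc b i - 2 * tt b) (5 * tt b)) := measure_union_le _ _
        _ = volume (⋃ b ∈ u, openCube n (WithLp.toLp 2 fun i => cc b i - 2 * tt b) (5 * tt b)) := by
            rw [hGnull, zero_add]
        _ ≤ ∑' b : u, volume (openCube n (WithLp.toLp 2 fun i => cc ↑b i - 2 * tt ↑b) (5 * tt ↑b)) :=
            measure_biUnion_le _ hucnt _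
        _ = ∑' b : u, ENNReal.ofReal e * volume (openCube n (cc ↑b) (tt ↑b)) := by
            refine tsum_congr fun b => ?_
            rw [volume_openCube _ (by nlinarith [(h1 b (huG b.2)).le] : (0:ℝ) ≤ 5 * tt ↑b),
              volume_openCube _ (h1 b (huG b.2)).le, mul_pow, ← ENNReal.ofReal_mul (by positivity),
              hee]
        _ = ENNReal.ofReal e * S := ENNReal.tsum_mul_left
    -- lower bound for volume (B \ A)
    have hsum2 : ENNReal.ofReal α * S ≤ volume (B \ A) := by
      have hsub : (⋃ b ∈ u, openCube n (cc b) (tt b) \ A) ⊆ B \ A := by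
        refine Set.iUnion₂_subset fun b hb => ?_
        exact Set.diff_subset_diff_left (h4 b (huG hb))
      calc ENNReal.ofReal α * S = ∑' b : u, ENNReal.ofReal α *
            volume (openCube n (cc ↑b) (tt ↑b)) := ENNReal.tsum_mul_left.symm
        _ = ∑' b : u, volume (openCube n (cc ↑b) (tt ↑b) \ A) :=
            tsum_congr fun b => (h5 b (huG b.2)).symm
        _ = volume (⋃ b ∈ u, openCube n (cc b) (tt b) \ A) := by
            refine (measure_biUnion hucnt ?_ fun b hb => (measurableSet_openCube _ _).diff hA).symm
            exact hdisj.mono fun b => diff_subset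
        _ ≤ volume (B \ A) := measure_mono hsub
    -- combine
    have hkey : ENNReal.ofReal α * volume A ≤ ENNReal.ofReal e * volume (B \ A) := by
      calc ENNReal.ofReal α * volume A ≤ ENNReal.ofReal α * (ENNReal.ofReal e * S) :=
            mul_le_mul_right hsum1 _
        _ = ENNReal.ofReal e * (ENNReal.ofReal α * S) := by ring
        _ ≤ ENNReal.ofReal e * volume (B \ A) := mul_le_mul_right hsum2 _
    -- pass to real numbers
    have hBQfin : volume B ≠ ⊤ := by
      intro h
      have := (measure_mono hBQ).trans_eq hQvol
      rw [h] at this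
      exact ENNReal.top_ne_one (top_le_iff.1 this).symm
    have hDfin : volume (B \ A) ≠ ⊤ := fun h =>
      hBQfin (top_le_iff.1 (h ▸ measure_mono diff_subset))
    set a := (volume A).toReal with ha
    set d := (volume (B \ A)).toReal with hd
    set bb := (volume B).toReal with hbb
    have hbsum : a + d = bb := by
      rw [ha, hd, hbb, ← ENNReal.toReal_add hAfin hDfin]
      congr 1
      rw [← measure_inter_add_diff B hA, inter_eq_self_of_subset_right hAB]
    have hkeyr : α * a ≤ e * d := by
      have hh := ENNReal.toReal_mono (ENNReal.mul_ne_top ENNReal.ofReal_ne_top hDfin) hkey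
      rwa [ENNReal.toReal_mul, ENNReal.toReal_mul, ENNReal.toReal_ofReal hα0.le,
        ENNReal.toReal_ofReal (by positivity)] at hh
    have ha0 : 0 ≤ a := ENNReal.toReal_nonneg
    have hd0 : 0 ≤ d := ENNReal.toReal_nonneg
    have hfinal : a ≤ (1 - 1 / (2 * e) * α) * bb := by
      have hαd : α * d ≤ d := mul_le_of_le_one_left hd0 hα1.le
      have hed : d ≤ e * d := le_mul_of_one_le_left hd0 he1
      have h2 : (2 * e) * a ≤ (2 * e - α) * bb := by nlinarith
      have h3 : (1 - 1 / (2 * e) * α) = (2 * e - α) / (2 * e) := by field_simp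
      rw [h3, div_mul_eq_mul_div, le_div_iff₀ (by linarith)]
      linarith
    calc volume A = ENNReal.ofReal a := (ENNReal.ofReal_toReal hAfin).symm
      _ ≤ ENNReal.ofReal ((1 - 1 / (2 * e) * α) * bb) := ENNReal.ofReal_le_ofReal hfinal
      _ = ENNReal.ofReal (1 - 1 / (2 * e) * α) * ENNReal.ofReal bb := by
          refine ENNReal.ofReal_mul ?_
          nlinarith
      _ = ENNReal.ofReal (1 - 1 / (2 * e) * α) * volume B := by
          rw [ENNReal.ofReal_toReal hBQfin]
end
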